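/- Let H be a graph on n vertices, c > 0, C > 0, and s ≥ 1. Suppose that for every vertex v with degree d_H(v) ≥ C log n, the neighborhood N_H(v) contains at least c·d_H(v)^s independent sets of size s. Then Σ_{S ∈ 𝓘} |N_H(S)| ≥ c·n^{1-s}·(2e(H) − Cn log n)^s, where 𝓘 is the family of independent s-sets of H. -/
import Mathlib


open scoped Classical
open Real

noncomputable def commonNbr {V : Type*} [Fintype V] (H : SimpleGraph V) (S : Finset V) :
    Finset V :=
  Finset.univ.filter fun v => ∀ u ∈ S, H.Adj u v

/-- If every vertex `v` of degree at least `C log n` has at least `c·d_H(v)^s`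
independent `s`-sets inside its neighborhood, then
`Σ_{S ∈ 𝓘} |N_H(S)| ≥ c·n^{1-s}·(2e(H) − C·n·log n)^s`. -/
theorem sum_common_nbr_lower {n : ℕ} (H : SimpleGraph (Fin n)) (s : ℕ) (hs : 1 ≤ s)
    (c C : ℝ) (hc : 0 < c) (hC : 0 < C)
    (𝓘 : Finset (Finset (Fin n)))
    (h𝓘 : 𝓘 = (Finset.univ.powersetCard s).filter
      fun S => ∀ u ∈ S, ∀ v ∈ S, ¬ H.Adj u v)
    (hedges : C * n * Real.log n ≤ 2 * H.edgeFinset.card)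
    (hnbhd : ∀ v : Fin n, C * Real.log n ≤ H.degree v →
      c * (H.degree v : ℝ) ^ s
        ≤ ((𝓘.filter fun S => S ⊆ H.neighborFinset v).card : ℝ)) :
    c * (n : ℝ) ^ ((1 : ℝ) - s) * (2 * H.edgeFinset.card - C * n * Real.log n) ^ s
      ≤ ∑ S ∈ 𝓘, ((commonNbr H S).card : ℝ) := by
  classical
  -- trivial case n = 0
  rcases Nat.eq_zero_or_pos n with hn | hn
  · subst hn
    have he : H.edgeFinset.card = 0 := by
      simp [Finset.card_eq_zero, Finset.eq_empty_of_isEmpty]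
    have : ((2 : ℝ) * H.edgeFinset.card - C * (0 : ℕ) * Real.log (0 : ℕ)) ^ s = 0 := by
      rw [he]; push_cast
      rw [show (2 * (0:ℝ) - C * 0 * Real.log 0) = 0 by ring,
        zero_pow (by omega : s ≠ 0)]
    calc c * ((0:ℕ) : ℝ) ^ ((1 : ℝ) - s) * (2 * H.edgeFinset.card - C * (0:ℕ) * Real.log (0:ℕ)) ^ s
        = 0 := by rw [this]; ring
      _ ≤ ∑ S ∈ 𝓘, ((commonNbr H S).card : ℝ) :=
          Finset.sum_nonneg (fun S _ => by positivity)
  -- main case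
  have hn1 : (1 : ℝ) ≤ n := by exact_mod_cast hn
  have hlog : 0 ≤ Real.log n := Real.log_nonneg hn1
  set good := Finset.univ.filter (fun v : Fin n => C * Real.log n ≤ H.degree v) with hgooddef
  -- double counting
  have hdc : ∑ S ∈ 𝓘, (commonNbr H S).card
      = ∑ v : Fin n, (𝓘.filter fun S => S ⊆ H.neighborFinset v).card := by
    simp only [commonNbr, Finset.card_filter]
    rw [Finset.sum_comm]
    refine Finset.sum_congr rfl fun v _ => Finset.sum_congr rfl fun S _ => ?_
    congr 1
    simp only [eq_iff_iff, Finset.subset_iff, SimpleGraph.mem_neighborFinset]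
    constructor
    · intro h u hu; exact (h u hu).symm
    · intro h u hu; exact (h hu).symm
  -- good is nonempty
  have hgoodne : good.Nonempty := by
    by_contra hne
    have hall : ∀ v : Fin n, (H.degree v : ℝ) < C * Real.log n := by
      intro v
      by_contra hle
      exact hne ⟨v, Finset.mem_filter.mpr ⟨Finset.mem_univ v, not_lt.mp hle⟩⟩
    have huniv : (Finset.univ : Finset (Fin n)).Nonempty := by
      simpa [Finset.univ_nonempty_iff] using Fin.pos_iff_nonempty.mp hn
    have hlt : ∑ v : Fin n, (H.degree v : ℝ) < ∑ _v : Fin n, C * Real.log n :=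
      Finset.sum_lt_sum_of_nonempty huniv (fun v _ => hall v)
    have htot : ∑ v : Fin n, (H.degree v : ℝ) = 2 * H.edgeFinset.card := by
      exact_mod_cast congrArg (Nat.cast : ℕ → ℝ) H.sum_degrees_eq_twice_card_edges
    rw [htot, Finset.sum_const, Finset.card_univ, Fintype.card_fin, nsmul_eq_mul] at hlt
    nlinarith [hedges]
  -- degree sum over good vertices
  have hgooddeg : (2 * H.edgeFinset.card : ℝ) - C * n * Real.log n
      ≤ ∑ v ∈ good, (H.degree v : ℝ) := by
    have htot : ∑ v : Fin n, (H.degree v : ℝ) = 2 * H.edgeFinset.card := by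
      exact_mod_cast congrArg (Nat.cast : ℕ → ℝ) H.sum_degrees_eq_twice_card_edges
    have hsplit := Finset.sum_filter_add_sum_filter_not Finset.univ
      (fun v : Fin n => C * Real.log n ≤ H.degree v) (fun v => (H.degree v : ℝ))
    have hbad : ∑ v ∈ Finset.univ.filter
        (fun v : Fin n => ¬ (C * Real.log n ≤ H.degree v)), (H.degree v : ℝ)
        ≤ C * n * Real.log n := by
      have h1 : ∑ v ∈ Finset.univ.filter
          (fun v : Fin n => ¬ (C * Real.log n ≤ H.degree v)), (H.degree v : ℝ)
          ≤ ∑ _v ∈ Finset.univ.filter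
          (fun v : Fin n => ¬ (C * Real.log n ≤ H.degree v)), C * Real.log n := by
        refine Finset.sum_le_sum fun v hv => ?_
        exact le_of_lt (not_le.mp (Finset.mem_filter.mp hv).2)
      rw [Finset.sum_const, nsmul_eq_mul] at h1
      refine h1.trans ?_
      have hcard : ((Finset.univ.filter
          (fun v : Fin n => ¬ (C * Real.log n ≤ H.degree v))).card : ℝ) ≤ n := by
        exact_mod_cast (Finset.card_filter_le _ _).trans_eq (by simp)
      nlinarith [mul_nonneg hC.le hlog]
    rw [← htot, ← hsplit]
    linarith
  set T : ℝ := 2 * H.edgeFinset.card - C * n * Real.log n with hT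
  have hT0 : 0 ≤ T := by simp only [hT]; linarith
  -- power mean
  have hpm : (∑ v ∈ good, (H.degree v : ℝ)) ^ s / (good.card : ℝ) ^ (s - 1)
      ≤ ∑ v ∈ good, (H.degree v : ℝ) ^ s := by
    have := pow_sum_div_card_le_sum_pow
      (f := fun v : Fin n => (H.degree v : ℝ)) (s := good)
      (fun v _ => by positivity) (s - 1)
    simpa [Nat.sub_add_cancel hs] using this
  -- card bounds
  have hcardpos : (0 : ℝ) < (good.card : ℝ) ^ (s - 1) := by
    have : 0 < good.card := Finset.card_pos.mpr hgoodne
    positivity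
  have hcardle : ((good.card : ℝ)) ^ (s - 1) ≤ (n : ℝ) ^ (s - 1) := by
    refine pow_le_pow_left₀ (by positivity) ?_ _
    exact_mod_cast (Finset.card_le_card (Finset.subset_univ _)).trans_eq (by simp)
  -- rewrite rpow
  have hrpow : (n : ℝ) ^ ((1 : ℝ) - s) = ((n : ℝ) ^ (s - 1))⁻¹ := by
    have h1 : ((1 : ℝ) - s) = -((s - 1 : ℕ) : ℝ) := by
      push_cast [Nat.cast_sub hs]; ring
    rw [h1, Real.rpow_neg (by positivity), Real.rpow_natCast]
  have key : c * (n : ℝ) ^ ((1 : ℝ) - s) * T ^ s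
      ≤ c * ∑ v ∈ good, (H.degree v : ℝ) ^ s := by
    have h2 : T ^ s / (n : ℝ) ^ (s - 1)
        ≤ (∑ v ∈ good, (H.degree v : ℝ)) ^ s / (good.card : ℝ) ^ (s - 1) := by
      refine div_le_div₀ (by positivity) ?_ hcardpos hcardle
      exact pow_le_pow_left₀ hT0 hgooddeg _
    have h3 : T ^ s / (n : ℝ) ^ (s - 1) ≤ ∑ v ∈ good, (H.degree v : ℝ) ^ s :=
      h2.trans hpm
    rw [hrpow]
    calc c * ((n : ℝ) ^ (s - 1))⁻¹ * T ^ s = c * (T ^ s / (n : ℝ) ^ (s - 1)) := by ring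
      _ ≤ c * ∑ v ∈ good, (H.degree v : ℝ) ^ s := by
          exact mul_le_mul_of_nonneg_left h3 hc.le
  refine key.trans ?_
  rw [Finset.mul_sum]
  calc ∑ v ∈ good, c * (H.degree v : ℝ) ^ s
      ≤ ∑ v ∈ good, ((𝓘.filter fun S => S ⊆ H.neighborFinset v).card : ℝ) :=
        Finset.sum_le_sum fun v hv => hnbhd v (Finset.mem_filter.mp hv).2
    _ ≤ ∑ v : Fin n, ((𝓘.filter fun S => S ⊆ H.neighborFinset v).card : ℝ) :=
        Finset.sum_le_sum_of_subset_of_nonneg (Finset.subset_univ _)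
          (fun v _ _ => by positivity)
    _ = ∑ S ∈ 𝓘, ((commonNbr H S).card : ℝ) := by
        rw [← Nat.cast_sum, ← Nat.cast_sum, hdc]
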